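/- Let X be a random variable with the Beta(a,b) distribution, where a > 0 and b > 1, and let 0 < δ_1 < δ_2. Then sup_{t ≥ 0} P( t δ_1 ≤ X ≤ t δ_2 ) ≤ (δ_2/δ_1 − 1) · √( a(a+b−1) / (2π(b−1)) ) · e^{1/(12(a+b−1))}. -/

import Mathlib

open MeasureTheory Real Filter Topology Nat

noncomputable section

-- Auxiliary development: Binet function and real Stirling bounds

/-- The summand of the Binet series. -/
def binetg (x : ℝ) : ℝ := (x + 1/2) * Real.log (1 + x⁻¹) - 1

lemma binetg_hasSum {x : ℝ} (hx : 0 < x) :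
    HasSum (fun k : ℕ => (1 / (2 * (k:ℝ) + 3)) * (1 / (2 * x + 1)) ^ (2 * k + 2)) (binetg x) := by
  have h := (Real.hasSum_log_one_add_inv hx).mul_left (x + 1/2)
  have h2 : (2:ℝ) * x + 1 ≠ 0 := by positivity
  have key : ∀ k : ℕ, (x + 1/2) * ((2:ℝ) * (1 / (2 * k + 1)) * (1 / (2 * x + 1)) ^ (2 * k + 1))
      = (1 / (2 * (k:ℝ) + 1)) * (1 / (2 * x + 1)) ^ (2 * k) := by
    intro k
    have hk : ((1:ℝ) / (2 * x + 1)) ^ (2 * k + 1) = (1 / (2 * x + 1)) ^ (2 * k) * (1/(2*x+1)) :=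
      pow_succ _ _
    rw [hk]
    field_simp
  simp only [key] at h
  have h0 := (hasSum_nat_add_iff' 1).mpr h
  simp only [Finset.sum_range_one] at h0
  norm_num at h0
  unfold binetg
  convert h0 using 1
  · rfl
  funext k
  rw [show 2*(k+1) = 2*k+2 from by ring, one_div, one_div, inv_pow]
  push_cast
  ring_nf


lemma binetg_nonneg {x : ℝ} (hx : 0 < x) : 0 ≤ binetg x :=
  (binetg_hasSum hx).nonneg fun k => by positivity

lemma binetg_le {x : ℝ} (hx : 0 < x) : binetg x ≤ 1/12 * (x⁻¹ - (x+1)⁻¹) := by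
  set t : ℝ := 1 / (2 * x + 1) with ht
  have ht0 : 0 < t := by positivity
  have ht1 : t < 1 := by
    rw [ht, div_lt_one (by positivity)]; linarith
  have hgeo : HasSum (fun k : ℕ => (1/3 : ℝ) * t^2 * (t^2) ^ k) (1/3 * t^2 * (1 - t^2)⁻¹) :=
    (hasSum_geometric_of_lt_one (by positivity) (by nlinarith)).mul_left _
  have hle : binetg x ≤ 1/3 * t^2 * (1 - t^2)⁻¹ := by
    refine hasSum_le (fun k => ?_) (binetg_hasSum hx) hgeo
    have hk : (0:ℝ) ≤ k := Nat.cast_nonneg k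
    have h1 : ((1:ℝ)/(2*k+3)) ≤ 1/3 := by
      rw [div_le_div_iff₀ (by linarith) (by norm_num)]; linarith
    calc (1/(2*(k:ℝ)+3)) * t ^ (2*k+2) ≤ 1/3 * t ^ (2*k+2) := by
            apply mul_le_mul_of_nonneg_right h1 (by positivity)
        _ = 1/3 * t^2 * (t^2)^k := by rw [← pow_mul]; ring
  refine hle.trans_eq ?_
  have h2 : (1:ℝ) - t^2 = (4*x^2 + 4*x) / (2*x+1)^2 := by
    rw [ht]; field_simp; ring
  rw [ht, h2]
  field_simp
  ring
/-- The Binet (Stirling remainder) function. -/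
def binet (x : ℝ) : ℝ :=
  Real.log (Real.Gamma x) - (x - 1/2) * Real.log x + x - Real.log (Real.sqrt (2 * π))

lemma binet_succ {x : ℝ} (hx : 0 < x) : binet x = binetg x + binet (x + 1) := by
  have hG : Real.Gamma (x + 1) = x * Real.Gamma x := Real.Gamma_add_one hx.ne'
  have hGpos : 0 < Real.Gamma x := Real.Gamma_pos_of_pos hx
  have hlog : Real.log (Real.Gamma (x+1)) = Real.log x + Real.log (Real.Gamma x) := by
    rw [hG, Real.log_mul hx.ne' hGpos.ne']
  have h1 : (1:ℝ) + x⁻¹ = (x + 1) / x := by field_simp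
  have h2 : Real.log ((x+1)/x) = Real.log (x+1) - Real.log x :=
    Real.log_div (by positivity) hx.ne'
  unfold binet binetg
  rw [hlog, h1, h2]
  ring

/-- Sum of the Binet series. -/
def binetS (x : ℝ) : ℝ := ∑' n : ℕ, binetg (x + n)

lemma binetg_add_summable {x : ℝ} (hx : 0 < x) : Summable (fun n : ℕ => binetg (x + n)) := by
  apply summable_of_sum_range_le (c := 1/12 * x⁻¹)
    (fun n => binetg_nonneg (by positivity))
  intro n
  calc ∑ i ∈ Finset.range n, binetg (x + i)
      ≤ ∑ i ∈ Finset.range n, (1/12 * ((x+i)⁻¹ - (x+i+1)⁻¹)) := by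
        apply Finset.sum_le_sum
        intro i _
        exact binetg_le (by positivity)
    _ = 1/12 * ∑ i ∈ Finset.range n, ((x+i)⁻¹ - (x+i+1)⁻¹) := by
        rw [Finset.mul_sum]
    _ ≤ 1/12 * x⁻¹ := by
        have : ∑ i ∈ Finset.range n, ((x+(i:ℝ))⁻¹ - (x+i+1)⁻¹)
            = x⁻¹ - (x+n)⁻¹ := by
          have h := Finset.sum_range_sub' (f := fun i : ℕ => (x+(i:ℝ))⁻¹) n
          push_cast at h
          simp only [add_zero] at h
          rw [← h]
          apply Finset.sum_congr rfl
          intro i _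
          ring_nf
        rw [this]
        have : (0:ℝ) ≤ (x+n)⁻¹ := by positivity
        linarith
lemma binetS_nonneg {x : ℝ} (hx : 0 < x) : 0 ≤ binetS x :=
  tsum_nonneg fun n => binetg_nonneg (by positivity)

lemma binetS_le {x : ℝ} (hx : 0 < x) : binetS x ≤ 1/12 * x⁻¹ := by
  apply tsum_le_of_sum_range_le (fun n => binetg_nonneg (by positivity))
  intro n
  calc ∑ i ∈ Finset.range n, binetg (x + i)
      ≤ ∑ i ∈ Finset.range n, (1/12 * ((x+i)⁻¹ - (x+i+1)⁻¹)) :=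
        Finset.sum_le_sum fun i _ => binetg_le (by positivity)
    _ = 1/12 * ∑ i ∈ Finset.range n, ((x+i)⁻¹ - (x+i+1)⁻¹) := by rw [Finset.mul_sum]
    _ ≤ 1/12 * x⁻¹ := by
        have h := Finset.sum_range_sub' (f := fun i : ℕ => (x+(i:ℝ))⁻¹) n
        push_cast at h
        simp only [add_zero] at h
        have he : ∑ i ∈ Finset.range n, ((x+(i:ℝ))⁻¹ - (x+i+1)⁻¹) = x⁻¹ - (x+n)⁻¹ := by
          rw [← h]; exact Finset.sum_congr rfl fun i _ => by ring_nf
        rw [he]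
        have : (0:ℝ) ≤ (x+n)⁻¹ := by positivity
        linarith

lemma binetS_succ {x : ℝ} (hx : 0 < x) : binetS x = binetg x + binetS (x + 1) := by
  unfold binetS
  rw [Summable.tsum_eq_zero_add (binetg_add_summable hx)]
  push_cast
  congr 1
  · norm_num
  · apply tsum_congr; intro n; push_cast; ring_nf
/-- Log-form Stirling approximation error for factorials. -/
def stirlingLog (n : ℕ) : ℝ :=
  Real.log ((n ! : ℝ)) - ((n:ℝ) + 1/2) * Real.log n + n - Real.log (Real.sqrt (2 * π))

lemma tendsto_stirlingLog : Tendsto stirlingLog atTop (𝓝 0) := by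
  have hπ : (0:ℝ) < Real.sqrt π := Real.sqrt_pos.mpr Real.pi_pos
  have h1 : Tendsto (fun n => Real.log (Stirling.stirlingSeq n)) atTop (𝓝 (Real.log (Real.sqrt π))) :=
    ((Real.continuousAt_log hπ.ne').tendsto).comp Stirling.tendsto_stirlingSeq_sqrt_pi
  have h2 : Tendsto (fun n => Real.log (Stirling.stirlingSeq n) - Real.log (Real.sqrt π))
      atTop (𝓝 0) := by
    simpa using h1.sub_const (Real.log (Real.sqrt π))
  apply h2.congr'
  filter_upwards [eventually_ge_atTop 1] with n hn
  have hn0 : (0:ℝ) < n := by exact_mod_cast hn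
  have hfac : (0:ℝ) < (n ! : ℝ) := by exact_mod_cast n.factorial_pos
  have hden : (0:ℝ) < Real.sqrt (2*n) * ((n:ℝ) / Real.exp 1) ^ n := by positivity
  unfold Stirling.stirlingSeq stirlingLog
  rw [Real.log_div hfac.ne' hden.ne', Real.log_mul (by positivity) (by positivity),
    Real.log_pow, Real.log_div hn0.ne' (Real.exp_pos 1).ne', Real.log_exp,
    Real.log_sqrt (by positivity), Real.log_mul two_ne_zero hn0.ne',
    Real.log_sqrt (by positivity : (0:ℝ) ≤ 2*π), Real.log_mul two_ne_zero Real.pi_pos.ne', Real.log_sqrt Real.pi_pos.le]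
  ring

lemma tendsto_aux_log (c x : ℝ) :
    Tendsto (fun n : ℕ => ((n:ℝ) + c) * Real.log (1 + x / n)) atTop (𝓝 x) := by
  have h1 : Tendsto (fun n : ℕ => (n:ℝ) * Real.log (1 + x / n)) atTop (𝓝 x) :=
    (Real.tendsto_mul_log_one_add_div_atTop x).comp tendsto_natCast_atTop_atTop
  have h0 : Tendsto (fun n : ℕ => (1:ℝ) + x / n) atTop (𝓝 1) := by
    have := tendsto_const_div_atTop_nhds_zero_nat x
    simpa using (tendsto_const_nhds (x := (1:ℝ))).add this
  have h2 : Tendsto (fun n : ℕ => Real.log (1 + x / n)) atTop (𝓝 0) := by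
    have := ((Real.continuousAt_log one_ne_zero).tendsto).comp h0
    rw [Real.log_one] at this
    exact this
  have h3 : Tendsto (fun n : ℕ => c * Real.log (1 + x / n)) atTop (𝓝 0) := by
    simpa using h2.const_mul c
  have h4 := h1.add h3
  rw [add_zero] at h4
  exact h4.congr fun n => by ring
lemma log_Gamma_conv_upper {x : ℝ} (hx0 : 0 < x) (hx1 : x ≤ 1) (m : ℕ) :
    Real.log (Real.Gamma (x + ((m:ℝ) + 1))) ≤ Real.log (m ! : ℝ) + x * Real.log ((m:ℝ) + 1) := by
  have hm1 : (0:ℝ) < (m:ℝ) + 1 := by positivity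
  have hm2 : (0:ℝ) < (m:ℝ) + 1 + 1 := by positivity
  have h := Real.convexOn_log_Gamma.2 (Set.mem_Ioi.mpr hm1) (Set.mem_Ioi.mpr hm2)
    (by linarith : (0:ℝ) ≤ 1 - x) hx0.le (by ring)
  have hpt : (1 - x) • ((m:ℝ) + 1) + x • ((m:ℝ) + 1 + 1) = x + ((m:ℝ) + 1) := by
    simp [smul_eq_mul]; ring
  rw [hpt] at h
  have hG1 : Real.Gamma ((m:ℝ) + 1) = (m ! : ℝ) := Real.Gamma_nat_eq_factorial m
  have hG2 : Real.Gamma ((m:ℝ) + 1 + 1) = ((m+1) ! : ℝ) := by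
    have := Real.Gamma_nat_eq_factorial (m+1)
    push_cast at this ⊢
    rw [← this]
  have hfac : ((m+1) ! : ℝ) = ((m:ℝ) + 1) * (m ! : ℝ) := by
    rw [Nat.factorial_succ]; push_cast; ring
  have hfp : (0:ℝ) < (m ! : ℝ) := by exact_mod_cast m.factorial_pos
  simp only [Function.comp_apply] at h
  rw [hG1, hG2, hfac, Real.log_mul hm1.ne' hfp.ne'] at h
  calc Real.log (Real.Gamma (x + ((m:ℝ) + 1)))
      ≤ (1 - x) * Real.log (m ! : ℝ) + x * (Real.log ((m:ℝ)+1) + Real.log (m ! : ℝ)) := h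
    _ = Real.log (m ! : ℝ) + x * Real.log ((m:ℝ) + 1) := by ring

lemma log_Gamma_conv_lower {x : ℝ} (hx0 : 0 < x) (hx1 : x ≤ 1) (m : ℕ) :
    Real.log (((m+1) !  : ℝ)) ≤
      Real.log (Real.Gamma (x + ((m:ℝ) + 1))) + (1 - x) * Real.log (x + ((m:ℝ) + 1)) := by
  have hy : (0:ℝ) < x + ((m:ℝ) + 1) := by positivity
  have hy2 : (0:ℝ) < x + ((m:ℝ) + 1) + 1 := by positivity
  have h := Real.convexOn_log_Gamma.2 (Set.mem_Ioi.mpr hy) (Set.mem_Ioi.mpr hy2)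
    hx0.le (by linarith : (0:ℝ) ≤ 1 - x) (by ring)
  have hpt : x • (x + ((m:ℝ) + 1)) + (1 - x) • (x + ((m:ℝ) + 1) + 1) = (m:ℝ) + 1 + 1 := by
    simp [smul_eq_mul]; ring
  rw [hpt] at h
  have hG2 : Real.Gamma ((m:ℝ) + 1 + 1) = ((m+1) ! : ℝ) := by
    have := Real.Gamma_nat_eq_factorial (m+1)
    push_cast at this ⊢
    rw [← this]
  have hGadd : Real.Gamma (x + ((m:ℝ) + 1) + 1) = (x + ((m:ℝ)+1)) * Real.Gamma (x + ((m:ℝ)+1)) :=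
    Real.Gamma_add_one hy.ne'
  have hGpos : 0 < Real.Gamma (x + ((m:ℝ) + 1)) := Real.Gamma_pos_of_pos hy
  simp only [Function.comp_apply] at h
  rw [hG2, hGadd, Real.log_mul hy.ne' hGpos.ne'] at h
  calc Real.log (((m+1) ! : ℝ)) ≤ x * Real.log (Real.Gamma (x + ((m:ℝ)+1)))
        + (1-x) * (Real.log (x + ((m:ℝ)+1)) + Real.log (Real.Gamma (x + ((m:ℝ)+1)))) := h
    _ = _ := by ring
lemma tendsto_binet_add {x : ℝ} (hx0 : 0 < x) (hx1 : x ≤ 1) :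
    Tendsto (fun m : ℕ => binet (x + ((m:ℝ) + 1))) atTop (𝓝 0) := by
  have hshift : Tendsto (fun m : ℕ => m + 1) atTop atTop := tendsto_add_atTop_nat 1
  have hsl : Tendsto (fun m : ℕ => stirlingLog (m+1)) atTop (𝓝 0) :=
    tendsto_stirlingLog.comp hshift
  have haux : ∀ c : ℝ, Tendsto
      (fun m : ℕ => (((m:ℝ) + 1) + c) * Real.log (1 + x / ((m:ℝ)+1))) atTop (𝓝 x) := by
    intro c
    have := (tendsto_aux_log c x).comp hshift
    apply this.congr
    intro m
    simp only [Function.comp_apply]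
    push_cast
    ring_nf
  have hlow : Tendsto (fun m : ℕ =>
      stirlingLog (m+1) - (((m:ℝ)+1) + 1/2) * Real.log (1 + x / ((m:ℝ)+1)) + x)
      atTop (𝓝 0) := by
    have := (hsl.sub (haux (1/2))).add_const x
    simpa using this
  have hupp : Tendsto (fun m : ℕ =>
      stirlingLog (m+1) - (((m:ℝ)+1) + (x - 1/2)) * Real.log (1 + x / ((m:ℝ)+1)) + x)
      atTop (𝓝 0) := by
    have := (hsl.sub (haux (x - 1/2))).add_const x
    simpa using this
  refine tendsto_of_tendsto_of_tendsto_of_le_of_le hlow hupp ?_ ?_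
  all_goals {
    intro m
    dsimp only
    have hm1 : (0:ℝ) < (m:ℝ) + 1 := by positivity
    have hy : (0:ℝ) < x + ((m:ℝ) + 1) := by positivity
    have hlogdiv : Real.log (1 + x / ((m:ℝ)+1)) =
        Real.log (x + ((m:ℝ)+1)) - Real.log ((m:ℝ)+1) := by
      rw [show (1:ℝ) + x / ((m:ℝ)+1) = (x + ((m:ℝ)+1)) / ((m:ℝ)+1) by field_simp; ring]
      exact Real.log_div hy.ne' hm1.ne'
    have hfac : ((m+1) ! : ℝ) = ((m:ℝ) + 1) * (m ! : ℝ) := by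
      rw [Nat.factorial_succ]; push_cast; ring
    have hfp : (0:ℝ) < (m ! : ℝ) := by exact_mod_cast m.factorial_pos
    have hsl1 : stirlingLog (m+1) = Real.log (((m+1):ℕ) ! : ℝ)
        - (((m:ℝ)+1) + 1/2) * Real.log ((m:ℝ)+1) + ((m:ℝ)+1) - Real.log (Real.sqrt (2*π)) := by
      unfold stirlingLog; push_cast; ring_nf
    have hfaclog : Real.log (((m+1):ℕ) ! : ℝ) = Real.log ((m:ℝ)+1) + Real.log (m ! : ℝ) := by
      rw [hfac, Real.log_mul hm1.ne' hfp.ne']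
    unfold binet
    rw [hlogdiv, hsl1, hfaclog]
    first
    | (have h := log_Gamma_conv_lower hx0 hx1 m
       rw [hfaclog] at h
       linarith)
    | (have h := log_Gamma_conv_upper hx0 hx1 m
       linarith)
  }
lemma binet_sub_eq {x : ℝ} (hx : 0 < x) :
    ∀ n : ℕ, binet x - binetS x = binet (x + n) - binetS (x + n) := by
  intro n
  induction n with
  | zero => simp
  | succ n ih =>
    have hp : 0 < x + n := by positivity
    have h1 := binet_succ hp
    have h2 := binetS_succ hp
    have hcast : x + ((n:ℝ) + 1) = (x + n) + 1 := by ring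
    push_cast
    rw [hcast]
    push_cast at ih
    linarith

lemma binet_eq_binetS_aux {x : ℝ} (hx0 : 0 < x) (hx1 : x ≤ 1) : binet x = binetS x := by
  have htend := tendsto_binet_add hx0 hx1
  have hStend : Tendsto (fun m : ℕ => binetS (x + ((m:ℝ) + 1))) atTop (𝓝 0) := by
    have hup : Tendsto (fun m : ℕ => 1/12 * (x + ((m:ℝ) + 1))⁻¹) atTop (𝓝 0) := by
      have h := tendsto_one_div_add_atTop_nhds_zero_nat (𝕜 := ℝ)
      have h2 : Tendsto (fun m : ℕ => (x + ((m:ℝ) + 1))⁻¹) atTop (𝓝 0) := by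
        apply Tendsto.inv_tendsto_atTop
        apply tendsto_atTop_add_const_left
        exact (tendsto_atTop_add_const_right _ 1 tendsto_natCast_atTop_atTop)
      simpa using h2.const_mul (1/12 : ℝ)
    refine tendsto_of_tendsto_of_tendsto_of_le_of_le tendsto_const_nhds hup ?_ ?_
    · intro m; exact binetS_nonneg (by positivity)
    · intro m; exact binetS_le (by positivity)
  have hconst : Tendsto (fun _ : ℕ => binet x - binetS x) atTop (𝓝 (binet x - binetS x)) :=
    tendsto_const_nhds
  have heq : (fun _ : ℕ => binet x - binetS x)
      = fun m : ℕ => binet (x + ((m:ℝ) + 1)) - binetS (x + ((m:ℝ) + 1)) := by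
    funext m
    have h := binet_sub_eq hx0 (m+1)
    push_cast at h
    linarith
  rw [heq] at hconst
  have := tendsto_nhds_unique hconst (by simpa using htend.sub hStend)
  linarith

lemma binet_eq_binetS {y : ℝ} (hy : 0 < y) : binet y = binetS y := by
  set n : ℕ := ⌈y⌉₊ - 1 with hn
  have hceil : 1 ≤ ⌈y⌉₊ := Nat.one_le_ceil_iff.mpr hy
  have hncast : (n:ℝ) = (⌈y⌉₊ : ℝ) - 1 := by
    rw [hn]; push_cast [Nat.cast_sub hceil]; ring
  have hlt : (⌈y⌉₊ : ℝ) < y + 1 := Nat.ceil_lt_add_one hy.le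
  have hle : y ≤ (⌈y⌉₊ : ℝ) := Nat.le_ceil y
  set x : ℝ := y - n with hxdef
  have hx0 : 0 < x := by rw [hxdef, hncast]; linarith
  have hx1 : x ≤ 1 := by rw [hxdef, hncast]; linarith
  have hxy : x + n = y := by rw [hxdef]; ring
  have h := binet_sub_eq hx0 n
  rw [hxy] at h
  have h0 := binet_eq_binetS_aux hx0 hx1
  linarith

lemma binet_nonneg {x : ℝ} (hx : 0 < x) : 0 ≤ binet x := by
  rw [binet_eq_binetS hx]; exact binetS_nonneg hx

lemma binet_le_inv {x : ℝ} (hx : 0 < x) : binet x ≤ 1/12 * x⁻¹ := by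
  rw [binet_eq_binetS hx]; exact binetS_le hx
lemma stirling_const_bound {a c : ℝ} (ha : 0 < a) (hc : 0 < c) :
    Real.Gamma ((a + c) + 1) / (Real.Gamma a * Real.Gamma (c + 1))
        * (a ^ a * c ^ c / (a + c) ^ (a + c))
      ≤ Real.sqrt (a * (a + c) / (2 * π * c)) * Real.exp (1 / (12 * (a + c))) := by
  set s := a + c with hs_def
  have hs : 0 < s := by positivity
  have hGa : 0 < Real.Gamma a := Real.Gamma_pos_of_pos ha
  have hGc : 0 < Real.Gamma c := Real.Gamma_pos_of_pos hc
  have hGs : 0 < Real.Gamma s := Real.Gamma_pos_of_pos hs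
  have hGs1 : Real.Gamma (s + 1) = s * Real.Gamma s := Real.Gamma_add_one hs.ne'
  have hGc1 : Real.Gamma (c + 1) = c * Real.Gamma c := Real.Gamma_add_one hc.ne'
  have hra : (0:ℝ) < a ^ a := Real.rpow_pos_of_pos ha a
  have hrc : (0:ℝ) < c ^ c := Real.rpow_pos_of_pos hc c
  have hrs : (0:ℝ) < s ^ s := Real.rpow_pos_of_pos hs s
  have hLHS : 0 < Real.Gamma (s + 1) / (Real.Gamma a * Real.Gamma (c + 1))
      * (a ^ a * c ^ c / s ^ s) := by
    rw [hGs1, hGc1]; positivity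
  have hargpos : 0 < a * s / (2 * π * c) := by
    have := Real.pi_pos; positivity
  have hRHS : 0 < Real.sqrt (a * s / (2 * π * c)) * Real.exp (1 / (12 * s)) := by
    have := Real.sqrt_pos.mpr hargpos; positivity
  rw [← Real.exp_log hLHS, ← Real.exp_log hRHS]
  apply Real.exp_le_exp.mpr
  have hlogLHS : Real.log (Real.Gamma (s + 1) / (Real.Gamma a * Real.Gamma (c + 1))
      * (a ^ a * c ^ c / s ^ s))
      = Real.log s + Real.log (Real.Gamma s) - Real.log (Real.Gamma a)
        - (Real.log c + Real.log (Real.Gamma c))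
        + (a * Real.log a + c * Real.log c - s * Real.log s) := by
    rw [Real.log_mul (by rw [hGs1, hGc1]; positivity) (by positivity),
      Real.log_div (by rw [hGs1]; positivity) (by positivity),
      Real.log_div (by positivity) hrs.ne',
      Real.log_mul hGa.ne' (by rw [hGc1]; positivity),
      hGs1, hGc1, Real.log_mul hs.ne' hGs.ne', Real.log_mul hc.ne' hGc.ne',
      Real.log_mul hra.ne' hrc.ne',
      Real.log_rpow ha, Real.log_rpow hc, Real.log_rpow hs]
    ring
  have hlogRHS : Real.log (Real.sqrt (a * s / (2 * π * c)) * Real.exp (1 / (12 * s)))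
      = 1/2 * (Real.log a + Real.log s - (Real.log 2 + Real.log π + Real.log c))
        + 1 / (12 * s) := by
    have hpi := Real.pi_pos
    rw [Real.log_mul (Real.sqrt_pos.mpr hargpos).ne' (Real.exp_pos _).ne',
      Real.log_sqrt hargpos.le, Real.log_exp,
      Real.log_div (by positivity) (by positivity),
      Real.log_mul ha.ne' hs.ne',
      Real.log_mul (by positivity : (2:ℝ)*π ≠ 0) hc.ne',
      Real.log_mul two_ne_zero hpi.ne']
    ring
  rw [hlogLHS, hlogRHS]
  have hsqrt2pi : Real.log (Real.sqrt (2 * π)) = 1/2 * (Real.log 2 + Real.log π) := by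
    rw [Real.log_sqrt (by positivity), Real.log_mul two_ne_zero Real.pi_pos.ne']
    ring
  have hba := binet_nonneg ha
  have hbc := binet_nonneg hc
  have hbs := binet_le_inv hs
  unfold binet at hba hbc hbs
  rw [hsqrt2pi] at hba hbc hbs
  have hinv : 1/12 * s⁻¹ = 1 / (12 * s) := by
    rw [one_div, one_div, mul_inv]
  rw [hinv] at hbs
  have hsac : s = a + c := hs_def
  linarith
lemma rpow_mul_rpow_le_max {a c x : ℝ} (ha : 0 < a) (hc : 0 < c)
    (hx0 : 0 ≤ x) (hx1 : x ≤ 1) :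
    x ^ a * (1 - x) ^ c ≤ a ^ a * c ^ c / (a + c) ^ (a + c) := by
  set s := a + c with hs_def
  have hs : 0 < s := by positivity
  have hra : (0:ℝ) < a ^ a := Real.rpow_pos_of_pos ha a
  have hrc : (0:ℝ) < c ^ c := Real.rpow_pos_of_pos hc c
  have hrs : (0:ℝ) < s ^ s := Real.rpow_pos_of_pos hs s
  have hRHSpos : (0:ℝ) < a ^ a * c ^ c / s ^ s := by positivity
  rcases eq_or_lt_of_le hx0 with h0 | h0
  · rw [← h0, Real.zero_rpow ha.ne', zero_mul]
    exact hRHSpos.le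
  rcases eq_or_lt_of_le hx1 with h1 | h1
  · rw [h1, sub_self, Real.zero_rpow hc.ne', mul_zero]
    exact hRHSpos.le
  have h1x : 0 < 1 - x := by linarith
  have hw1 : (0:ℝ) ≤ a / s := by positivity
  have hw2 : (0:ℝ) ≤ c / s := by positivity
  have hp1 : (0:ℝ) ≤ x * s / a := by positivity
  have hp2 : (0:ℝ) ≤ (1 - x) * s / c := by positivity
  have hwsum : a / s + c / s = 1 := by field_simp; exact hs_def.symm
  have hAM := Real.geom_mean_le_arith_mean2_weighted hw1 hw2 hp1 hp2 hwsum
  have hAMval : a / s * (x * s / a) + c / s * ((1 - x) * s / c) = 1 := by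
    field_simp; ring
  rw [hAMval] at hAM
  have hG0 : (0:ℝ) ≤ (x * s / a) ^ (a / s) * ((1 - x) * s / c) ^ (c / s) := by
    have := Real.rpow_nonneg hp1 (a/s)
    have := Real.rpow_nonneg hp2 (c/s)
    positivity
  have hpow := Real.rpow_le_one hG0 hAM hs.le
  have hea : a / s * s = a := by field_simp
  have hec : c / s * s = c := by field_simp
  rw [Real.mul_rpow (Real.rpow_nonneg hp1 _) (Real.rpow_nonneg hp2 _),
    ← Real.rpow_mul hp1, ← Real.rpow_mul hp2, hea, hec] at hpow
  have e1 : (x * s / a) ^ a = x ^ a * s ^ a / a ^ a := by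
    rw [Real.div_rpow (by positivity) ha.le, Real.mul_rpow h0.le hs.le]
  have e2 : ((1 - x) * s / c) ^ c = (1 - x) ^ c * s ^ c / c ^ c := by
    rw [Real.div_rpow (by positivity) hc.le, Real.mul_rpow h1x.le hs.le]
  have e3 : s ^ a * s ^ c = s ^ s := by
    rw [← Real.rpow_add hs, ← hs_def]
  have h1' : x ^ a * (1 - x) ^ c
      = (x * s / a) ^ a * ((1 - x) * s / c) ^ c * (a ^ a * c ^ c / s ^ s) := by
    rw [e1, e2]
    field_simp
    rw [← e3]
  rw [h1']
  calc (x * s / a) ^ a * ((1 - x) * s / c) ^ c * (a ^ a * c ^ c / s ^ s)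
      ≤ 1 * (a ^ a * c ^ c / s ^ s) :=
        mul_le_mul_of_nonneg_right hpow hRHSpos.le
    _ = a ^ a * c ^ c / s ^ s := one_mul _

/-- The density of the Beta(a,b) distribution with respect to Lebesgue measure. -/
def betaPDF (a b x : ℝ) : ℝ :=
  if 0 ≤ x ∧ x ≤ 1 then
    Real.Gamma (a + b) / (Real.Gamma a * Real.Gamma b) * x ^ (a - 1) * (1 - x) ^ (b - 1)
  else 0

/-- The Beta(a,b) distribution on `ℝ`. -/
def betaMeasure (a b : ℝ) : Measure ℝ :=
  volume.withDensity fun x => ENNReal.ofReal (betaPDF a b x)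

/-- Anti-concentration bound for the Beta(a,b) distribution, `a > 0`, `b > 1`: for all
`0 < δ₁ < δ₂`, `sup_{t ≥ 0} P(t δ₁ ≤ X ≤ t δ₂)` is at most
`(δ₂/δ₁ − 1) √(a(a+b−1)/(2π(b−1))) e^{1/(12(a+b−1))}`. -/
theorem beta_anticoncentration (a b : ℝ) (ha : 0 < a) (hb : 1 < b)
    (δ₁ δ₂ : ℝ) (h₁ : 0 < δ₁) (h₂ : δ₁ < δ₂) :
    ⨆ t ∈ Set.Ici (0 : ℝ), betaMeasure a b {y | t * δ₁ ≤ y ∧ y ≤ t * δ₂} ≤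
      ENNReal.ofReal ((δ₂ / δ₁ - 1) * Real.sqrt (a * (a + b - 1) / (2 * Real.pi * (b - 1))) *
        Real.exp (1 / (12 * (a + b - 1)))) := by
  have hc : (0:ℝ) < b - 1 := by linarith
  have hs : (0:ℝ) < a + b - 1 := by linarith
  have hKpos : 0 < Real.Gamma (a + b) / (Real.Gamma a * Real.Gamma b) := by
    have h1 := Real.Gamma_pos_of_pos (show (0:ℝ) < a + b by linarith)
    have h2 := Real.Gamma_pos_of_pos ha
    have h3 := Real.Gamma_pos_of_pos (show (0:ℝ) < b by linarith)
    positivity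
  set K := Real.Gamma (a + b) / (Real.Gamma a * Real.Gamma b) with hK
  set M := a ^ a * (b - 1) ^ (b - 1) / (a + b - 1) ^ (a + b - 1) with hM
  have hMpos : 0 < M := by
    have h1 := Real.rpow_pos_of_pos ha a
    have h2 := Real.rpow_pos_of_pos hc (b - 1)
    have h3 := Real.rpow_pos_of_pos hs (a + b - 1)
    rw [hM]; positivity
  set C := K * M with hC
  have hCpos : 0 < C := mul_pos hKpos hMpos
  set Q := Real.sqrt (a * (a + b - 1) / (2 * Real.pi * (b - 1))) *
      Real.exp (1 / (12 * (a + b - 1))) with hQ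
  have hQpos : 0 < Q := by
    have hpi := Real.pi_pos
    have : 0 < a * (a + b - 1) / (2 * Real.pi * (b - 1)) := by positivity
    have := Real.sqrt_pos.mpr this
    rw [hQ]; positivity
  have hCle : C ≤ Q := by
    have h := stirling_const_bound ha hc
    rw [show a + (b - 1) + 1 = a + b by ring, show b - 1 + 1 = b by ring,
      show a + (b - 1) = a + b - 1 by ring] at h
    exact h
  refine iSup₂_le fun t ht => ?_
  have hset : {y | t * δ₁ ≤ y ∧ y ≤ t * δ₂} = Set.Icc (t * δ₁) (t * δ₂) := rfl
  rw [hset, betaMeasure, withDensity_apply _ measurableSet_Icc]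
  rcases eq_or_lt_of_le (Set.mem_Ici.mp ht) with h0 | h0
  · -- t = 0
    rw [← h0, zero_mul, zero_mul, Set.Icc_self]
    rw [setLIntegral_measure_zero _ _ (by simp [Real.volume_singleton])]
    exact bot_le
  · -- t > 0
    have hl : 0 < t * δ₁ := mul_pos h0 h₁
    have hlr : t * δ₁ < t * δ₂ := by
      apply mul_lt_mul_of_pos_left h₂ h0
    have hr : 0 < t * δ₂ := hl.trans hlr
    have hpt : ∀ x ∈ Set.Icc (t * δ₁) (t * δ₂),
        ENNReal.ofReal (betaPDF a b x) ≤ ENNReal.ofReal (C * x⁻¹) := by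
      intro x hx
      apply ENNReal.ofReal_le_ofReal
      have hx0 : 0 < x := lt_of_lt_of_le hl hx.1
      by_cases hx1 : x ≤ 1
      · rw [betaPDF, if_pos ⟨hx0.le, hx1⟩]
        have key := rpow_mul_rpow_le_max ha hc hx0.le hx1
        rw [show a + (b - 1) = a + b - 1 by ring] at key
        have hxa : x ^ (a - 1) = x ^ a * x⁻¹ := by
          rw [Real.rpow_sub hx0, Real.rpow_one, div_eq_mul_inv]
        have h1x : (0:ℝ) ≤ (1 - x) ^ (b - 1) := Real.rpow_nonneg (by linarith) _
        calc K * x ^ (a - 1) * (1 - x) ^ (b - 1)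
            = (x ^ a * (1 - x) ^ (b - 1)) * (K * x⁻¹) := by rw [hxa]; ring
          _ ≤ M * (K * x⁻¹) := by
              apply mul_le_mul_of_nonneg_right (by rw [hM]; exact key)
              positivity
          _ = C * x⁻¹ := by rw [hC]; ring
      · rw [betaPDF, if_neg (fun h => hx1 h.2)]
        positivity
    have hcont : ContinuousOn (fun x : ℝ => C * x⁻¹) (Set.Icc (t * δ₁) (t * δ₂)) := by
      apply ContinuousOn.mul continuousOn_const
      apply ContinuousOn.inv₀ continuousOn_id
      intro x hx
      exact ne_of_gt (lt_of_lt_of_le hl hx.1)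
    have hInt : IntegrableOn (fun x : ℝ => C * x⁻¹) (Set.Icc (t * δ₁) (t * δ₂)) volume :=
      hcont.integrableOn_Icc
    have hnn : 0 ≤ᵐ[volume.restrict (Set.Icc (t * δ₁) (t * δ₂))] fun x : ℝ => C * x⁻¹ := by
      rw [EventuallyLE, ae_restrict_iff' measurableSet_Icc]
      apply ae_of_all
      intro x hx
      have hx0 : 0 < x := lt_of_lt_of_le hl hx.1
      positivity
    have hIval : ∫ x in Set.Icc (t * δ₁) (t * δ₂), C * x⁻¹ = C * Real.log (δ₂ / δ₁) := by
      rw [MeasureTheory.integral_Icc_eq_integral_Ioc,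
        ← intervalIntegral.integral_of_le hlr.le, intervalIntegral.integral_const_mul,
        integral_inv_of_pos hl hr]
      congr 2
      rw [mul_comm t δ₂, mul_comm t δ₁, mul_div_mul_right _ _ h0.ne']
    calc ∫⁻ x in Set.Icc (t * δ₁) (t * δ₂), ENNReal.ofReal (betaPDF a b x)
        ≤ ∫⁻ x in Set.Icc (t * δ₁) (t * δ₂), ENNReal.ofReal (C * x⁻¹) := by
          apply setLIntegral_mono (Measurable.ennreal_ofReal (measurable_const.mul measurable_inv))
          exact hpt
      _ = ENNReal.ofReal (∫ x in Set.Icc (t * δ₁) (t * δ₂), C * x⁻¹) :=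
          (MeasureTheory.ofReal_integral_eq_lintegral_ofReal hInt hnn).symm
      _ ≤ ENNReal.ofReal ((δ₂ / δ₁ - 1) * Real.sqrt (a * (a + b - 1) / (2 * Real.pi * (b - 1))) *
            Real.exp (1 / (12 * (a + b - 1)))) := by
          apply ENNReal.ofReal_le_ofReal
          rw [hIval]
          have hd : 1 < δ₂ / δ₁ := (one_lt_div h₁).mpr h₂
          have hlog1 : Real.log (δ₂ / δ₁) ≤ δ₂ / δ₁ - 1 :=
            Real.log_le_sub_one_of_pos (by linarith)
          have hlog0 : 0 ≤ Real.log (δ₂ / δ₁) := Real.log_nonneg hd.le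
          calc C * Real.log (δ₂ / δ₁) ≤ C * (δ₂ / δ₁ - 1) :=
                mul_le_mul_of_nonneg_left hlog1 hCpos.le
            _ ≤ Q * (δ₂ / δ₁ - 1) := mul_le_mul_of_nonneg_right hCle (by linarith)
            _ = (δ₂ / δ₁ - 1) * Real.sqrt (a * (a + b - 1) / (2 * Real.pi * (b - 1))) *
                Real.exp (1 / (12 * (a + b - 1))) := by rw [hQ]; ring

end
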